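/- Let A be a closed densely defined operator on a Banach space 𝓑 such that all real λ with |λ| > γ lie in the resolvent set and ‖(λ−A)⁻¹‖ ≤ (|λ|−γ)⁻¹. Then A generates a γ-contractive one-parameter group (W_t)_{t∈ℝ} on 𝓑: W_0 = id, W_{t+s} = W_t W_s, t ↦ W_t φ is C¹ with values in D(A) and d/dt W_t φ = A W_t φ for φ ∈ D(A), and ‖W_t φ‖ ≤ e^{γ|t|}‖φ‖ for all φ ∈ 𝓑 and t ∈ ℝ. -/

import Mathlib

open Real Filter Set Topology

noncomputable section

namespace HYG

set_option linter.unusedSectionVars false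
set_option maxHeartbeats 1000000
set_option synthInstance.maxHeartbeats 400000

variable {B : Type*} [NormedAddCommGroup B] [NormedSpace ℝ B] [CompleteSpace B]

lemma norm_pow_le_pow (x : B →L[ℝ] B) (n : ℕ) : ‖x ^ n‖ ≤ ‖x‖ ^ n := by
  cases n with
  | zero => simp only [pow_zero]; exact ContinuousLinearMap.norm_id_le
  | succ n => exact norm_pow_le' x n.succ_pos

/-- Norm bound for the exponential in the operator algebra. -/
lemma norm_exp_le (x : B →L[ℝ] B) : ‖NormedSpace.exp x‖ ≤ Real.exp ‖x‖ := by
  rw [NormedSpace.exp_eq_tsum ℝ]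
  have hsum : Summable fun n : ℕ => ‖((n.factorial : ℝ))⁻¹ • x ^ n‖ :=
    NormedSpace.norm_expSeries_summable' (𝕂 := ℝ) x
  have hsum2 : Summable fun n : ℕ => ((n.factorial : ℝ))⁻¹ * ‖x‖ ^ n := by
    simpa [div_eq_inv_mul] using Real.summable_pow_div_factorial ‖x‖
  refine (norm_tsum_le_tsum_norm hsum).trans ?_
  have hexp : Real.exp ‖x‖ = ∑' n : ℕ, ((n.factorial : ℝ))⁻¹ * ‖x‖ ^ n := by
    rw [Real.exp_eq_exp_ℝ, NormedSpace.exp_eq_tsum ℝ]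
    simp [smul_eq_mul]
  rw [hexp]
  refine Summable.tsum_le_tsum (fun n => ?_) hsum hsum2
  have hns : ‖((n.factorial : ℝ))⁻¹ • x ^ n‖ = ((n.factorial : ℝ))⁻¹ * ‖x ^ n‖ := by
    have h := norm_smul (α := ℝ) (β := B →L[ℝ] B) ((n.factorial : ℝ))⁻¹ (x ^ n)
    simp at h ⊢
    rw [h]
  rw [hns]
  exact mul_le_mul_of_nonneg_left (norm_pow_le_pow x n) (by positivity)
structure Pack (p : Submodule ℝ B) (A : p →ₗ[ℝ] B) (γ : ℝ) : Prop where
  hγ : 0 ≤ γ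
  dense : Dense (p : Set B)
  bij : ∀ lam : ℝ, γ < lam → Function.Bijective (fun u : p => lam • (u : B) - A u)
  bound : ∀ lam : ℝ, γ < lam → ∀ u : p, (lam - γ) * ‖(u : B)‖ ≤ ‖lam • (u : B) - A u‖

variable {p : Submodule ℝ B} {A : p →ₗ[ℝ] B} {γ : ℝ}

/-- `lam • u - A u` as a linear map. -/
def opL (A : p →ₗ[ℝ] B) (lam : ℝ) : p →ₗ[ℝ] B := lam • p.subtype - A

@[simp] lemma opL_apply (lam : ℝ) (u : p) : opL A lam u = lam • (u : B) - A u := rfl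

lemma opL_bij (hp : Pack p A γ) {lam : ℝ} (h : γ < lam) : Function.Bijective (opL A lam) :=
  hp.bij lam h

/-- Resolvent, as a linear map into `p`. -/
def resP (hp : Pack p A γ) {lam : ℝ} (h : γ < lam) : B →ₗ[ℝ] p :=
  (LinearEquiv.ofBijective (opL A lam) (opL_bij hp h)).symm.toLinearMap

lemma opL_resP (hp : Pack p A γ) {lam : ℝ} (h : γ < lam) (ψ : B) :
    lam • (resP hp h ψ : B) - A (resP hp h ψ) = ψ := by
  exact (LinearEquiv.ofBijective (opL A lam) (opL_bij hp h)).apply_symm_apply ψ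

lemma resP_opL (hp : Pack p A γ) {lam : ℝ} (h : γ < lam) (u : p) :
    resP hp h (lam • (u : B) - A u) = u := by
  exact (LinearEquiv.ofBijective (opL A lam) (opL_bij hp h)).symm_apply_apply u

lemma norm_resP_le (hp : Pack p A γ) {lam : ℝ} (h : γ < lam) (ψ : B) :
    ‖(resP hp h ψ : B)‖ ≤ (lam - γ)⁻¹ * ‖ψ‖ := by
  have hb := hp.bound lam h (resP hp h ψ)
  rw [opL_resP hp h ψ] at hb
  have hpos : 0 < lam - γ := sub_pos.2 h
  rw [inv_mul_eq_div, le_div_iff₀ hpos]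
  linarith [hb]

/-- Resolvent as a continuous linear map `B →L[ℝ] B` (with range inside `p`). -/
def Res (hp : Pack p A γ) {lam : ℝ} (h : γ < lam) : B →L[ℝ] B :=
  LinearMap.mkContinuous (p.subtype.comp (resP hp h)) ((lam - γ)⁻¹)
    (fun ψ => by simpa using norm_resP_le hp h ψ)

@[simp] lemma Res_apply (hp : Pack p A γ) {lam : ℝ} (h : γ < lam) (ψ : B) :
    Res hp h ψ = (resP hp h ψ : B) := rfl

lemma Res_mem (hp : Pack p A γ) {lam : ℝ} (h : γ < lam) (ψ : B) : Res hp h ψ ∈ p :=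
  (resP hp h ψ).2

lemma norm_Res_le (hp : Pack p A γ) {lam : ℝ} (h : γ < lam) :
    ‖Res hp h‖ ≤ (lam - γ)⁻¹ :=
  LinearMap.mkContinuous_norm_le _ (inv_nonneg.2 (sub_pos.2 h).le) _

lemma Res_A (hp : Pack p A γ) {lam : ℝ} (h : γ < lam) (u : p) :
    Res hp h (A u) = lam • Res hp h (u : B) - (u : B) := by
  have h1 := resP_opL hp h u
  have : resP hp h (lam • (u:B)) - resP hp h (A u) = u := by
    rw [← map_sub]; exact h1
  have h2 : (resP hp h (lam • (u:B)) : B) - (resP hp h (A u) : B) = (u : B) := by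
    exact_mod_cast congrArg (Subtype.val) this
  simp only [Res_apply]
  have h3 : (resP hp h (lam • (u:B)) : B) = lam • (resP hp h (u:B) : B) := by
    rw [map_smul]; rfl
  rw [h3] at h2
  rw [sub_eq_iff_eq_add] at h2
  rw [h2]; abel
lemma A_resP (hp : Pack p A γ) {lam : ℝ} (h : γ < lam) (ψ : B) :
    A (resP hp h ψ) = lam • Res hp h ψ - ψ := by
  have h' := opL_resP hp h ψ
  rw [sub_eq_iff_eq_add] at h'
  rw [Res_apply, h']; abel

lemma opL_resP' (hp : Pack p A γ) {lam : ℝ} (h : γ < lam) (ψ : B) :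
    opL A lam (resP hp h ψ) = ψ := opL_resP hp h ψ

lemma Res_identity (hp : Pack p A γ) {lam mu : ℝ} (h1 : γ < lam) (h2 : γ < mu) (ψ : B) :
    Res hp h1 ψ - Res hp h2 ψ = (mu - lam) • Res hp h2 (Res hp h1 ψ) := by
  have key : resP hp h1 ψ - resP hp h2 ψ = (mu - lam) • resP hp h2 (Res hp h1 ψ) := by
    apply (opL_bij hp h2).1
    rw [map_sub, map_smul]
    have e1 : opL A mu (resP hp h1 ψ) = (mu - lam) • Res hp h1 ψ + ψ := by
      rw [opL_apply, A_resP hp h1 ψ, sub_smul, ← Res_apply hp h1]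
      abel
    rw [e1, opL_resP' hp h2 ψ, opL_resP' hp h2 (Res hp h1 ψ)]
    abel
  have := congrArg (Subtype.val) key
  push_cast at this
  simpa using this

lemma Res_comm (hp : Pack p A γ) {lam mu : ℝ} (h1 : γ < lam) (h2 : γ < mu) (ψ : B) :
    Res hp h1 (Res hp h2 ψ) = Res hp h2 (Res hp h1 ψ) := by
  rcases eq_or_ne lam mu with rfl | hne
  · rfl
  · have h := Res_identity hp h1 h2 ψ
    have h' := Res_identity hp h2 h1 ψ
    have hc : (mu - lam) • Res hp h2 (Res hp h1 ψ) = (mu - lam) • Res hp h1 (Res hp h2 ψ) := by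
      rw [← h]
      have : Res hp h2 ψ - Res hp h1 ψ = (lam - mu) • Res hp h1 (Res hp h2 ψ) := h'
      have h2' : Res hp h1 ψ - Res hp h2 ψ = -((lam - mu) • Res hp h1 (Res hp h2 ψ)) := by
        rw [← this]; abel
      rw [h2', ← neg_smul]
      ring_nf
    have hml : mu - lam ≠ 0 := sub_ne_zero.2 (Ne.symm hne)
    exact (smul_right_injective B hml hc).symm

/-- The sequence of spectral parameters. -/
def lamb (γ : ℝ) (n : ℕ) : ℝ := γ + n + 1

lemma lamb_gt (hγ : 0 ≤ γ) (n : ℕ) : γ < lamb γ n := by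
  have : (0:ℝ) ≤ n := Nat.cast_nonneg n
  simp only [lamb]; linarith

lemma lamb_sub (γ : ℝ) (n : ℕ) : lamb γ n - γ = (n:ℝ) + 1 := by simp [lamb]; ring

lemma lamb_nonneg (hγ : 0 ≤ γ) (n : ℕ) : 0 ≤ lamb γ n := by
  have : (0:ℝ) ≤ n := Nat.cast_nonneg n
  simp only [lamb]; linarith

/-- Resolvent at `lamb γ n`. -/
def Rn (hp : Pack p A γ) (n : ℕ) : B →L[ℝ] B := Res hp (lamb_gt hp.hγ n)

lemma norm_Rn_le (hp : Pack p A γ) (n : ℕ) : ‖Rn hp n‖ ≤ ((n:ℝ) + 1)⁻¹ := by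
  have := norm_Res_le hp (lamb_gt hp.hγ n)
  rwa [lamb_sub] at this

lemma norm_Rn_apply_le (hp : Pack p A γ) (n : ℕ) (ψ : B) :
    ‖Rn hp n ψ‖ ≤ ((n:ℝ) + 1)⁻¹ * ‖ψ‖ := by
  calc ‖Rn hp n ψ‖ ≤ ‖Rn hp n‖ * ‖ψ‖ := (Rn hp n).le_opNorm ψ
  _ ≤ ((n:ℝ) + 1)⁻¹ * ‖ψ‖ := by
      apply mul_le_mul_of_nonneg_right (norm_Rn_le hp n) (norm_nonneg ψ)

lemma Rn_comm (hp : Pack p A γ) (n m : ℕ) : Commute (Rn hp n) (Rn hp m) := by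
  ext ψ
  exact Res_comm hp _ _ ψ
lemma Rn_A (hp : Pack p A γ) (n : ℕ) (u : p) :
    Rn hp n (A u) = lamb γ n • Rn hp n (u : B) - (u : B) :=
  Res_A hp (lamb_gt hp.hγ n) u

lemma tendsto_lamRn_p (hp : Pack p A γ) (φ : p) :
    Tendsto (fun n => lamb γ n • Rn hp n (φ : B)) atTop (𝓝 (φ : B)) := by
  rw [tendsto_iff_norm_sub_tendsto_zero]
  have hb : ∀ n : ℕ, ‖lamb γ n • Rn hp n (φ : B) - (φ : B)‖ ≤ ((n:ℝ)+1)⁻¹ * ‖A φ‖ := by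
    intro n
    have h1 : lamb γ n • Rn hp n (φ : B) - (φ : B) = Rn hp n (A φ) := by
      rw [Rn_A hp n φ]
    rw [h1]
    exact norm_Rn_apply_le hp n (A φ)
  refine squeeze_zero (fun n => norm_nonneg _) hb ?_
  have h0 : Tendsto (fun n : ℕ => ((n:ℝ)+1)⁻¹) atTop (𝓝 0) := by
    simpa [one_div] using tendsto_one_div_add_atTop_nhds_zero_nat (𝕜 := ℝ)
  simpa using h0.mul_const ‖A φ‖

lemma norm_lamRn_apply_le (hp : Pack p A γ) (n : ℕ) (ψ : B) :
    ‖lamb γ n • Rn hp n ψ‖ ≤ (1 + γ) * ‖ψ‖ := by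
  have h1 : ‖lamb γ n • Rn hp n ψ‖ = lamb γ n * ‖Rn hp n ψ‖ := by
    rw [norm_smul, Real.norm_eq_abs, abs_of_nonneg (lamb_nonneg hp.hγ n)]
  rw [h1]
  have h2 := norm_Rn_apply_le hp n ψ
  have h3 : lamb γ n * ‖Rn hp n ψ‖ ≤ lamb γ n * (((n:ℝ)+1)⁻¹ * ‖ψ‖) :=
    mul_le_mul_of_nonneg_left h2 (lamb_nonneg hp.hγ n)
  refine h3.trans ?_
  have hn : (0:ℝ) < (n:ℝ) + 1 := by positivity
  rw [← mul_assoc]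
  apply mul_le_mul_of_nonneg_right _ (norm_nonneg ψ)
  rw [mul_inv_le_iff₀ hn, lamb]
  have hγ := hp.hγ
  have : (0:ℝ) ≤ n := Nat.cast_nonneg n
  nlinarith

lemma tendsto_lamRn (hp : Pack p A γ) (ψ : B) :
    Tendsto (fun n => lamb γ n • Rn hp n ψ) atTop (𝓝 ψ) := by
  rw [Metric.tendsto_atTop]
  intro ε hε
  have hγ0 := hp.hγ
  have hd : (0:ℝ) < ε / (2 * (2 + γ)) := div_pos hε (by linarith)
  obtain ⟨φ, hφball, hφp⟩ := Metric.dense_iff.1 hp.dense ψ _ hd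
  have hφ : dist ψ φ < ε / (2 * (2 + γ)) := by
    rw [Metric.mem_ball] at hφball; rwa [dist_comm]
  have htend := tendsto_lamRn_p hp ⟨φ, hφp⟩
  rw [Metric.tendsto_atTop] at htend
  obtain ⟨N, hN⟩ := htend (ε/2) (by positivity)
  refine ⟨N, fun n hn => ?_⟩
  have h1 := hN n hn
  rw [dist_eq_norm] at h1 ⊢
  have key : lamb γ n • Rn hp n ψ - ψ
      = lamb γ n • Rn hp n (ψ - φ) + (lamb γ n • Rn hp n φ - φ) + (φ - ψ) := by
    simp only [map_sub, smul_sub]; abel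
  rw [key]
  have e1 : ‖lamb γ n • Rn hp n (ψ - φ)‖ ≤ (1+γ) * ‖ψ - φ‖ := norm_lamRn_apply_le hp n _
  have e2 : ‖lamb γ n • Rn hp n φ - φ‖ < ε/2 := h1
  have e3 : ‖ψ - φ‖ < ε / (2 * (2+γ)) := by rwa [dist_eq_norm] at hφ
  have hγ := hp.hγ
  have hb3 : ‖lamb γ n • Rn hp n (ψ - φ) + (lamb γ n • Rn hp n φ - φ) + (φ - ψ)‖
      ≤ ‖lamb γ n • Rn hp n (ψ - φ)‖ + ‖lamb γ n • Rn hp n φ - φ‖ + ‖φ - ψ‖ := norm_add₃_le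
  have h4 : ‖φ - ψ‖ = ‖ψ - φ‖ := norm_sub_rev φ ψ
  have h5 : (2+γ) * ‖ψ - φ‖ < (2+γ) * (ε/(2*(2+γ))) :=
    mul_lt_mul_of_pos_left e3 (by linarith)
  have h6 : (2+γ)*(ε/(2*(2+γ))) = ε/2 := by field_simp
  linarith
/-- Yosida approximation. -/
def Vn (hp : Pack p A γ) (n : ℕ) : B →L[ℝ] B :=
  (lamb γ n)^2 • Rn hp n - lamb γ n • 1

lemma Vn_apply_p (hp : Pack p A γ) (n : ℕ) (φ : p) :
    Vn hp n (φ : B) = lamb γ n • Rn hp n (A φ) := by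
  rw [Rn_A hp n φ]
  simp only [Vn, ContinuousLinearMap.sub_apply, ContinuousLinearMap.smul_apply,
    ContinuousLinearMap.one_apply, smul_sub, smul_smul]
  ring_nf

lemma Vn_tendsto (hp : Pack p A γ) (φ : p) :
    Tendsto (fun n => Vn hp n (φ : B)) atTop (𝓝 (A φ)) := by
  have : (fun n => Vn hp n (φ : B)) = fun n => lamb γ n • Rn hp n (A φ) := by
    funext n; exact Vn_apply_p hp n φ
  rw [this]
  exact tendsto_lamRn hp (A φ)

lemma Rn_comm_apply (hp : Pack p A γ) (n m : ℕ) (ψ : B) :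
    Rn hp n (Rn hp m ψ) = Rn hp m (Rn hp n ψ) := Res_comm hp _ _ ψ

lemma Vn_comm_Rn (hp : Pack p A γ) (n m : ℕ) : Commute (Vn hp n) (Rn hp m) := by
  unfold Vn
  exact ((Rn_comm hp n m).smul_left _).sub_left ((Commute.one_left _).smul_left _)

lemma Vn_comm (hp : Pack p A γ) (n m : ℕ) : Commute (Vn hp n) (Vn hp m) := by
  have c1 := Vn_comm_Rn hp n m
  conv_rhs => rw [Vn]
  exact (c1.smul_right _).sub_right ((Commute.one_right _).smul_right _)

/-- Exponential of `t • Vn`. -/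
def Tt (hp : Pack p A γ) (n : ℕ) (t : ℝ) : B →L[ℝ] B :=
  NormedSpace.exp (t • Vn hp n)

lemma exp_smul_one (c : ℝ) :
    NormedSpace.exp (c • (1 : B →L[ℝ] B)) = Real.exp c • 1 := by
  have h1 : c • (1 : B →L[ℝ] B) = algebraMap ℝ (B →L[ℝ] B) c := by
    rw [Algebra.algebraMap_eq_smul_one]
  rw [h1, ← NormedSpace.algebraMap_exp_comm, ← Real.exp_eq_exp_ℝ,
    Algebra.algebraMap_eq_smul_one]

/-- exponent rate. -/
def kap (γ : ℝ) (n : ℕ) : ℝ := γ * lamb γ n / ((n:ℝ) + 1)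

lemma kap_nonneg (hγ : 0 ≤ γ) (n : ℕ) : 0 ≤ kap γ n := by
  have := lamb_nonneg hγ n
  have hn : (0:ℝ) < (n:ℝ)+1 := by positivity
  exact div_nonneg (mul_nonneg hγ this) hn.le

lemma kap_le (hγ : 0 ≤ γ) (n : ℕ) : kap γ n ≤ γ * (1 + γ) := by
  have hn : (0:ℝ) < (n:ℝ)+1 := by positivity
  rw [kap, div_le_iff₀ hn, lamb]
  have h0 : (0:ℝ) ≤ n := Nat.cast_nonneg n
  nlinarith [mul_nonneg (mul_nonneg hγ hγ) h0]

lemma kap_tendsto (hγ : 0 ≤ γ) : Tendsto (kap γ) atTop (𝓝 γ) := by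
  have heq : kap γ = fun n : ℕ => γ + γ^2 * ((n:ℝ)+1)⁻¹ := by
    funext n
    have hn : ((n:ℝ)+1) ≠ 0 := by positivity
    simp only [kap, lamb]
    field_simp
    ring
  rw [heq]
  have h0 : Tendsto (fun n : ℕ => ((n:ℝ)+1)⁻¹) atTop (𝓝 0) := by
    simpa [one_div] using tendsto_one_div_add_atTop_nhds_zero_nat (𝕜 := ℝ)
  have := (h0.const_mul (γ^2)).const_add γ
  simpa using this

lemma opnorm_smul (c : ℝ) (x : B →L[ℝ] B) : ‖c • x‖ = |c| * ‖x‖ := by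
  have h := norm_smul (α := ℝ) (β := B →L[ℝ] B) c x
  simpa using h

lemma norm_one_le' : ‖(1 : B →L[ℝ] B)‖ ≤ 1 := ContinuousLinearMap.norm_id_le

lemma Tt_norm_le (hp : Pack p A γ) (n : ℕ) {t : ℝ} (ht : 0 ≤ t) :
    ‖Tt hp n t‖ ≤ Real.exp (kap γ n * t) := by
  have hl0 := lamb_nonneg hp.hγ n
  have hn1 : (0:ℝ) < (n:ℝ)+1 := by positivity
  have hc1nn : 0 ≤ t * (lamb γ n)^2 := mul_nonneg ht (sq_nonneg _)
  have hsplit : t • Vn hp n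
      = (t * (lamb γ n)^2) • Rn hp n + (-(t * lamb γ n)) • (1 : B →L[ℝ] B) := by
    unfold Vn
    rw [smul_sub, smul_smul, smul_smul, neg_smul, ← sub_eq_add_neg]
  have hcomm : Commute ((t * (lamb γ n)^2) • Rn hp n) ((-(t * lamb γ n)) • (1 : B →L[ℝ] B)) :=
    ((Commute.one_right (Rn hp n)).smul_left _).smul_right _
  let +nondep : NormedAlgebra ℚ (B →L[ℝ] B) := .restrictScalars ℚ ℝ _
  rw [Tt, hsplit, NormedSpace.exp_add_of_commute hcomm, exp_smul_one]
  calc ‖NormedSpace.exp ((t * (lamb γ n)^2) • Rn hp n) * (Real.exp (-(t * lamb γ n)) • 1)‖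
      ≤ ‖NormedSpace.exp ((t * (lamb γ n)^2) • Rn hp n)‖
        * ‖Real.exp (-(t * lamb γ n)) • (1 : B →L[ℝ] B)‖ := norm_mul_le _ _
    _ ≤ Real.exp (t * (lamb γ n)^2 * ((n:ℝ)+1)⁻¹) * Real.exp (-(t * lamb γ n)) := by
        apply mul_le_mul ?_ ?_ (norm_nonneg _) (Real.exp_nonneg _)
        · refine (norm_exp_le _).trans (Real.exp_le_exp.2 ?_)
          rw [opnorm_smul, abs_of_nonneg hc1nn]
          exact mul_le_mul_of_nonneg_left (norm_Rn_le hp n) hc1nn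
        · rw [opnorm_smul, abs_of_pos (Real.exp_pos _)]
          exact mul_le_of_le_one_right (Real.exp_pos _).le norm_one_le'
    _ = Real.exp (kap γ n * t) := by
        rw [← Real.exp_add]
        congr 1
        simp only [kap, lamb]
        field_simp
        ring

lemma Tt_apply_norm_le (hp : Pack p A γ) (n : ℕ) {t : ℝ} (ht : 0 ≤ t) (ψ : B) :
    ‖Tt hp n t ψ‖ ≤ Real.exp (kap γ n * t) * ‖ψ‖ :=
  ((Tt hp n t).le_opNorm ψ).trans
    (mul_le_mul_of_nonneg_right (Tt_norm_le hp n ht) (norm_nonneg ψ))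

lemma Tt_apply_norm_le' (hp : Pack p A γ) (n : ℕ) {t : ℝ} (ht : 0 ≤ t) (ψ : B) :
    ‖Tt hp n t ψ‖ ≤ Real.exp (γ*(1+γ)*t) * ‖ψ‖ := by
  refine (Tt_apply_norm_le hp n ht ψ).trans
    (mul_le_mul_of_nonneg_right (Real.exp_le_exp.2 ?_) (norm_nonneg ψ))
  exact mul_le_mul_of_nonneg_right (kap_le hp.hγ n) ht
lemma Tt_zero (hp : Pack p A γ) (n : ℕ) : Tt hp n 0 = 1 := by
  rw [Tt, zero_smul, NormedSpace.exp_zero]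

lemma Tt_add (hp : Pack p A γ) (n : ℕ) (s t : ℝ) :
    Tt hp n (s + t) = Tt hp n s * Tt hp n t := by
  let +nondep : NormedAlgebra ℚ (B →L[ℝ] B) := .restrictScalars ℚ ℝ _
  rw [Tt, add_smul, NormedSpace.exp_add_of_commute (((Commute.refl _).smul_left s).smul_right t)]
  rfl

lemma Tt_comm_Rn (hp : Pack p A γ) (n m : ℕ) (t : ℝ) : Commute (Tt hp n t) (Rn hp m) :=
  Commute.exp_left ((Vn_comm_Rn hp n m).smul_left t)

lemma Tt_comm_Vn (hp : Pack p A γ) (n m : ℕ) (t : ℝ) : Commute (Tt hp n t) (Vn hp m) :=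
  Commute.exp_left (((Vn_comm hp n m)).smul_left t)

lemma Tt_hasDerivAt (hp : Pack p A γ) (n : ℕ) (ψ : B) (t : ℝ) :
    HasDerivAt (fun s => Tt hp n s ψ) (Tt hp n t (Vn hp n ψ)) t := by
  have h := hasDerivAt_exp_smul_const (𝕂 := ℝ) (Vn hp n) t
  have h2 := h.clm_apply (hasDerivAt_const t ψ)
  simpa [Tt, ContinuousLinearMap.mul_apply] using h2

lemma Tt_continuous (hp : Pack p A γ) (n : ℕ) (ψ : B) :
    Continuous fun s => Tt hp n s ψ := by
  rw [continuous_iff_continuousAt]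
  exact fun t => (Tt_hasDerivAt hp n ψ t).continuousAt

lemma Tt_integral (hp : Pack p A γ) (n : ℕ) (ψ : B) (t : ℝ) :
    Tt hp n t ψ = ψ + ∫ s in (0:ℝ)..t, Tt hp n s (Vn hp n ψ) := by
  have h := intervalIntegral.integral_eq_sub_of_hasDerivAt
    (f := fun s => Tt hp n s ψ) (f' := fun s => Tt hp n s (Vn hp n ψ))
    (fun s _ => Tt_hasDerivAt hp n ψ s)
    ((Tt_continuous hp n (Vn hp n ψ)).intervalIntegrable 0 t)
  rw [h]
  simp [Tt_zero]

lemma Tt_diff_est (hp : Pack p A γ) (n m : ℕ) {t : ℝ} (ht : 0 ≤ t) (φ : B) :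
    ‖Tt hp n t φ - Tt hp m t φ‖
      ≤ Real.exp (γ*(1+γ)*t) * t * ‖Vn hp n φ - Vn hp m φ‖ := by
  set c := γ*(1+γ) with hc
  set g : ℝ → B := fun s => (Tt hp m (t - s) * Tt hp n s) φ with hgdef
  have hg : ∀ s : ℝ, HasDerivAt g
      (Tt hp m (t-s) (Tt hp n s (Vn hp n φ - Vn hp m φ))) s := by
    intro s
    have h1 : HasDerivAt (fun s : ℝ => Tt hp m (t - s))
        ((-1 : ℝ) • (Tt hp m (t-s) * Vn hp m)) s := by
      have hg2 := hasDerivAt_exp_smul_const (𝕂 := ℝ) (Vn hp m) (t - s)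
      have hf1 : HasDerivAt (fun s : ℝ => t - s) (-1) s := (hasDerivAt_id s).const_sub t
      exact HasDerivAt.scomp s hg2 hf1
    have h2 := hasDerivAt_exp_smul_const (𝕂 := ℝ) (Vn hp n) s
    have hmul := h1.mul (h2 : HasDerivAt (fun s : ℝ => Tt hp n s) (Tt hp n s * Vn hp n) s)
    have happ := hmul.clm_apply (hasDerivAt_const s φ)
    have hcm : NormedSpace.exp (s • Vn hp n) * Vn hp m
        = Vn hp m * NormedSpace.exp (s • Vn hp n) := (Tt_comm_Vn hp n m s).eq
    have heq : ((-1 : ℝ) • (Tt hp m (t-s) * Vn hp m)) * NormedSpace.exp (s • Vn hp n)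
        + Tt hp m (t-s) * (NormedSpace.exp (s • Vn hp n) * Vn hp n)
        = Tt hp m (t-s) * NormedSpace.exp (s • Vn hp n) * (Vn hp n - Vn hp m) := by
      rw [neg_one_smul, neg_mul]
      rw [show (Tt hp m (t-s) * Vn hp m) * NormedSpace.exp (s • Vn hp n)
          = Tt hp m (t-s) * NormedSpace.exp (s • Vn hp n) * Vn hp m from by
        rw [mul_assoc, ← hcm, ← mul_assoc]]
      noncomm_ring
    have happ' : (Tt hp m (t-s) * NormedSpace.exp (s • Vn hp n) * (Vn hp n - Vn hp m)) φ
        + (Tt hp m (t-s) * NormedSpace.exp (s • Vn hp n)) 0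
        = Tt hp m (t-s) (Tt hp n s (Vn hp n φ - Vn hp m φ)) := by
      simp [Tt, ContinuousLinearMap.mul_apply]
    rw [heq] at happ
    simp only [Pi.mul_apply] at happ
    rw [happ'] at happ
    exact happ
  have hbound : ∀ s ∈ Icc (0:ℝ) t,
      ‖Tt hp m (t-s) (Tt hp n s (Vn hp n φ - Vn hp m φ))‖
        ≤ Real.exp (c*t) * ‖Vn hp n φ - Vn hp m φ‖ := by
    intro s hs
    have hs0 : 0 ≤ s := hs.1
    have hst : 0 ≤ t - s := by linarith [hs.2]
    calc ‖Tt hp m (t-s) (Tt hp n s (Vn hp n φ - Vn hp m φ))‖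
        ≤ Real.exp (c*(t-s)) * ‖Tt hp n s (Vn hp n φ - Vn hp m φ)‖ :=
          Tt_apply_norm_le' hp m hst _
      _ ≤ Real.exp (c*(t-s)) * (Real.exp (c*s) * ‖Vn hp n φ - Vn hp m φ‖) := by
          exact mul_le_mul_of_nonneg_left (Tt_apply_norm_le' hp n hs0 _) (Real.exp_nonneg _)
      _ = Real.exp (c*t) * ‖Vn hp n φ - Vn hp m φ‖ := by
          rw [← mul_assoc, ← Real.exp_add]; ring_nf
  have hmv := Convex.norm_image_sub_le_of_norm_hasDerivWithin_le
    (f := g) (f' := fun s => Tt hp m (t-s) (Tt hp n s (Vn hp n φ - Vn hp m φ)))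
    (fun s hs => (hg s).hasDerivWithinAt)
    hbound (convex_Icc 0 t) (left_mem_Icc.2 ht) (right_mem_Icc.2 ht)
  have hg0 : g 0 = Tt hp m t φ := by
    simp [hgdef, ContinuousLinearMap.mul_apply, Tt_zero]
  have hgt : g t = Tt hp n t φ := by
    simp [hgdef, ContinuousLinearMap.mul_apply, Tt_zero]
  rw [hg0, hgt] at hmv
  have : ‖t - 0‖ = t := by rw [sub_zero, Real.norm_eq_abs, abs_of_nonneg ht]
  rw [this] at hmv
  calc ‖Tt hp n t φ - Tt hp m t φ‖ ≤ Real.exp (c*t) * ‖Vn hp n φ - Vn hp m φ‖ * t := hmv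
    _ = Real.exp (c*t) * t * ‖Vn hp n φ - Vn hp m φ‖ := by ring
lemma Tt_cauchy_p (hp : Pack p A γ) {t : ℝ} (ht : 0 ≤ t) (φ : p) :
    CauchySeq (fun n => Tt hp n t (φ : B)) := by
  have hv : CauchySeq (fun n => Vn hp n (φ : B)) := (Vn_tendsto hp φ).cauchySeq
  rw [Metric.cauchySeq_iff] at hv ⊢
  intro ε hε
  set K := Real.exp (γ*(1+γ)*t) * t + 1 with hK
  have hK0 : 0 < K := by positivity
  obtain ⟨N, hN⟩ := hv (ε / K) (div_pos hε hK0)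
  refine ⟨N, fun a ha b hb => ?_⟩
  have h1 := Tt_diff_est hp a b ht (φ : B)
  rw [dist_eq_norm]
  calc ‖Tt hp a t φ - Tt hp b t φ‖ ≤ Real.exp (γ*(1+γ)*t) * t * ‖Vn hp a φ - Vn hp b φ‖ := h1
    _ ≤ K * ‖Vn hp a φ - Vn hp b φ‖ := by
        apply mul_le_mul_of_nonneg_right _ (norm_nonneg _)
        rw [hK]; nlinarith [Real.exp_pos (γ*(1+γ)*t), mul_nonneg (Real.exp_nonneg (γ*(1+γ)*t)) ht]
    _ < K * (ε / K) := by
        apply mul_lt_mul_of_pos_left _ hK0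
        have := hN a ha b hb
        rwa [dist_eq_norm] at this
    _ = ε := by field_simp

lemma Tt_cauchy (hp : Pack p A γ) {t : ℝ} (ht : 0 ≤ t) (ψ : B) :
    CauchySeq (fun n => Tt hp n t ψ) := by
  rw [Metric.cauchySeq_iff]
  intro ε hε
  set C := Real.exp (γ*(1+γ)*t) with hC
  have hC0 : 0 < C := Real.exp_pos _
  have hd : (0:ℝ) < ε / (4*C) := by positivity
  obtain ⟨φ, hφball, hφp⟩ := Metric.dense_iff.1 hp.dense ψ _ hd
  have hφ : ‖ψ - φ‖ < ε / (4*C) := by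
    rw [Metric.mem_ball] at hφball; rw [← dist_eq_norm, dist_comm]; exact hφball
  have hc := Tt_cauchy_p hp ht ⟨φ, hφp⟩
  rw [Metric.cauchySeq_iff] at hc
  obtain ⟨N, hN⟩ := hc (ε/2) (by positivity)
  refine ⟨N, fun a ha b hb => ?_⟩
  have key : Tt hp a t ψ - Tt hp b t ψ
      = Tt hp a t (ψ - φ) + (Tt hp a t φ - Tt hp b t φ) + Tt hp b t (φ - ψ) := by
    simp only [map_sub]; abel
  rw [dist_eq_norm, key]
  have e1 : ‖Tt hp a t (ψ - φ)‖ ≤ C * ‖ψ - φ‖ := Tt_apply_norm_le' hp a ht _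
  have e2 : ‖Tt hp a t φ - Tt hp b t φ‖ < ε/2 := by
    have := hN a ha b hb; rwa [dist_eq_norm] at this
  have e3 : ‖Tt hp b t (φ - ψ)‖ ≤ C * ‖ψ - φ‖ := by
    have := Tt_apply_norm_le' hp b ht (φ - ψ)
    rwa [norm_sub_rev φ ψ] at this
  have hnorm := norm_add₃_le (a := Tt hp a t (ψ - φ)) (b := Tt hp a t φ - Tt hp b t φ)
    (c := Tt hp b t (φ - ψ))
  have hCφ : C * ‖ψ - φ‖ < C * (ε/(4*C)) := mul_lt_mul_of_pos_left hφ hC0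
  have hCe : C * (ε/(4*C)) = ε/4 := by field_simp
  linarith

/-- The semigroup, as a plain function. -/
def Sg (hp : Pack p A γ) (t : ℝ) (ψ : B) : B :=
  limUnder atTop (fun n => Tt hp n (max t 0) ψ)

lemma Sg_tendsto (hp : Pack p A γ) (t : ℝ) (ψ : B) :
    Tendsto (fun n => Tt hp n (max t 0) ψ) atTop (𝓝 (Sg hp t ψ)) :=
  (Tt_cauchy hp (le_max_right t 0) ψ).tendsto_limUnder

lemma Sg_norm_le (hp : Pack p A γ) (t : ℝ) (ψ : B) :
    ‖Sg hp t ψ‖ ≤ Real.exp (γ * max t 0) * ‖ψ‖ := by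
  have h1 : Tendsto (fun n => ‖Tt hp n (max t 0) ψ‖) atTop (𝓝 ‖Sg hp t ψ‖) :=
    (Sg_tendsto hp t ψ).norm
  have h2 : Tendsto (fun n => Real.exp (kap γ n * max t 0) * ‖ψ‖) atTop
      (𝓝 (Real.exp (γ * max t 0) * ‖ψ‖)) := by
    have := ((kap_tendsto hp.hγ).mul_const (max t 0)).rexp.mul_const ‖ψ‖
    exact this
  exact le_of_tendsto_of_tendsto' h1 h2 (fun n => Tt_apply_norm_le hp n (le_max_right t 0) ψ)

/-- The semigroup, as continuous linear maps. -/
def Sc (hp : Pack p A γ) (t : ℝ) : B →L[ℝ] B :=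
  LinearMap.mkContinuous
    { toFun := Sg hp t
      map_add' := fun ψ χ => by
        refine tendsto_nhds_unique (Sg_tendsto hp t (ψ + χ)) ?_
        have := (Sg_tendsto hp t ψ).add (Sg_tendsto hp t χ)
        simpa [map_add] using this
      map_smul' := fun c ψ => by
        refine tendsto_nhds_unique (Sg_tendsto hp t (c • ψ)) ?_
        have := (Sg_tendsto hp t ψ).const_smul c
        simpa [map_smul] using this }
    (Real.exp (γ * max t 0)) (fun ψ => Sg_norm_le hp t ψ)

lemma Sc_apply (hp : Pack p A γ) (t : ℝ) (ψ : B) : Sc hp t ψ = Sg hp t ψ := rfl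

lemma Sc_tendsto (hp : Pack p A γ) {t : ℝ} (ht : 0 ≤ t) (ψ : B) :
    Tendsto (fun n => Tt hp n t ψ) atTop (𝓝 (Sc hp t ψ)) := by
  have := Sg_tendsto hp t ψ
  rwa [max_eq_left ht] at this

lemma Sc_norm_apply (hp : Pack p A γ) {t : ℝ} (ht : 0 ≤ t) (ψ : B) :
    ‖Sc hp t ψ‖ ≤ Real.exp (γ * t) * ‖ψ‖ := by
  have := Sg_norm_le hp t ψ
  rwa [max_eq_left ht] at this

lemma Sc_zero (hp : Pack p A γ) : Sc hp 0 = 1 := by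
  ext ψ
  refine tendsto_nhds_unique (Sc_tendsto hp le_rfl ψ) ?_
  have : (fun n => Tt hp n 0 ψ) = fun _ => ψ := by
    funext n; rw [Tt_zero]; rfl
  rw [this]
  simpa using tendsto_const_nhds

lemma Sc_nonpos (hp : Pack p A γ) {t : ℝ} (ht : t ≤ 0) : Sc hp t = 1 := by
  have h : Sc hp t = Sc hp 0 := by
    ext ψ
    show Sg hp t ψ = Sg hp 0 ψ
    unfold Sg
    rw [max_eq_right ht, max_self]
  rw [h, Sc_zero]

lemma Sc_tendsto_apply (hp : Pack p A γ) {t : ℝ} (ht : 0 ≤ t) {χ : ℕ → B} {χ₀ : B}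
    (hχ : Tendsto χ atTop (𝓝 χ₀)) :
    Tendsto (fun n => Tt hp n t (χ n)) atTop (𝓝 (Sc hp t χ₀)) := by
  have h1 : Tendsto (fun n => Tt hp n t (χ n) - Tt hp n t χ₀) atTop (𝓝 0) := by
    apply squeeze_zero_norm (a := fun n => Real.exp (γ*(1+γ)*t) * ‖χ n - χ₀‖)
    · intro n
      have : Tt hp n t (χ n) - Tt hp n t χ₀ = Tt hp n t (χ n - χ₀) := by rw [map_sub]
      rw [this]
      exact Tt_apply_norm_le' hp n ht _
    · have := (tendsto_iff_norm_sub_tendsto_zero.1 hχ).const_mul (Real.exp (γ*(1+γ)*t))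
      simpa using this
  have := h1.add (Sc_tendsto hp ht χ₀)
  simpa using this

lemma Sc_add (hp : Pack p A γ) {s t : ℝ} (hs : 0 ≤ s) (ht : 0 ≤ t) :
    Sc hp (s + t) = Sc hp s * Sc hp t := by
  ext ψ
  refine tendsto_nhds_unique (Sc_tendsto hp (by linarith) ψ) ?_
  have h1 : (fun n => Tt hp n (s + t) ψ) = fun n => Tt hp n s (Tt hp n t ψ) := by
    funext n; rw [Tt_add]; rfl
  rw [h1]
  have := Sc_tendsto_apply hp hs (Sc_tendsto hp ht ψ)
  simpa using this

lemma Sc_comm_Rn (hp : Pack p A γ) {t : ℝ} (ht : 0 ≤ t) (m : ℕ) (ψ : B) :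
    Sc hp t (Rn hp m ψ) = Rn hp m (Sc hp t ψ) := by
  refine tendsto_nhds_unique (Sc_tendsto hp ht (Rn hp m ψ)) ?_
  have h1 : (fun n => Tt hp n t (Rn hp m ψ)) = fun n => Rn hp m (Tt hp n t ψ) := by
    funext n
    have := (Tt_comm_Rn hp n m t).eq
    calc Tt hp n t (Rn hp m ψ) = (Tt hp n t * Rn hp m) ψ := rfl
      _ = (Rn hp m * Tt hp n t) ψ := by rw [this]
      _ = Rn hp m (Tt hp n t ψ) := rfl
  rw [h1]
  exact ((Rn hp m).continuous.tendsto _).comp (Sc_tendsto hp ht ψ)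

lemma Sc_invariant (hp : Pack p A γ) {t : ℝ} (ht : 0 ≤ t) (φ : p) :
    ∃ h : Sc hp t (φ : B) ∈ p, A ⟨Sc hp t (φ : B), h⟩ = Sc hp t (A φ) := by
  set l0 := lamb_gt hp.hγ 0
  have hφeq : Rn hp 0 (lamb γ 0 • (φ:B) - A φ) = (φ:B) := by
    show (resP hp l0 (lamb γ 0 • (φ:B) - A φ) : B) = (φ:B)
    rw [resP_opL hp l0 φ]
  have hSc : Sc hp t (φ:B) = Rn hp 0 (Sc hp t (lamb γ 0 • (φ:B) - A φ)) := by
    conv_lhs => rw [← hφeq]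
    rw [Sc_comm_Rn hp ht]
  have hmem : Sc hp t (φ:B) ∈ p := by rw [hSc]; exact Res_mem hp l0 _
  refine ⟨hmem, ?_⟩
  have hsub : (⟨Sc hp t (φ:B), hmem⟩ : p) = resP hp l0 (Sc hp t (lamb γ 0 • (φ:B) - A φ)) := by
    apply Subtype.ext
    show Sc hp t (φ:B) = ((resP hp l0 (Sc hp t (lamb γ 0 • (φ:B) - A φ))) : B)
    rw [hSc]; rfl
  rw [hsub, A_resP hp l0]
  have h2 : (Res hp l0) (Sc hp t (lamb γ 0 • (φ:B) - A φ)) = Sc hp t (φ:B) := hSc.symm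
  rw [h2, map_sub, map_smul]
  abel
lemma Tt_Sc_est (hp : Pack p A γ) {t : ℝ} (ht : 0 ≤ t) (φ : p) (n : ℕ) :
    ‖Tt hp n t (φ:B) - Sc hp t (φ:B)‖
      ≤ Real.exp (γ*(1+γ)*t) * t * ‖Vn hp n (φ:B) - A φ‖ := by
  have h1 : Tendsto (fun m => ‖Tt hp n t (φ:B) - Tt hp m t (φ:B)‖) atTop
      (𝓝 ‖Tt hp n t (φ:B) - Sc hp t (φ:B)‖) :=
    ((tendsto_const_nhds.sub (Sc_tendsto hp ht (φ:B))).norm)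
  have h2 : Tendsto (fun m => Real.exp (γ*(1+γ)*t) * t * ‖Vn hp n (φ:B) - Vn hp m (φ:B)‖) atTop
      (𝓝 (Real.exp (γ*(1+γ)*t) * t * ‖Vn hp n (φ:B) - A φ‖)) :=
    ((tendsto_const_nhds.sub (Vn_tendsto hp φ)).norm).const_mul _
  exact le_of_tendsto_of_tendsto' h1 h2 (fun m => Tt_diff_est hp n m ht (φ:B))

lemma Sc_max (hp : Pack p A γ) (t : ℝ) : Sc hp (max t 0) = Sc hp t := by
  ext ψ
  show Sg hp (max t 0) ψ = Sg hp t ψ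
  unfold Sg
  rw [max_assoc, max_self]

lemma Sc_cont_p (hp : Pack p A γ) (φ : p) : Continuous fun t => Sc hp t (φ:B) := by
  rw [continuous_iff_continuousAt]
  intro t₀
  set T := |t₀| + 1 with hT
  have hT0 : 0 < T := by positivity
  have ht₀ : t₀ ∈ Ioo (-T) T := by
    constructor <;> [linarith [neg_abs_le t₀]; linarith [le_abs_self t₀]]
  have hγγ : 0 ≤ γ*(1+γ) := by nlinarith [hp.hγ]
  have hunif : TendstoUniformlyOn (fun n t => Tt hp n (max t 0) (φ:B))
      (fun t => Sc hp t (φ:B)) atTop (Icc (-T) T) := by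
    rw [Metric.tendstoUniformlyOn_iff]
    intro ε hε
    have hlim : Tendsto (fun n => Real.exp (γ*(1+γ)*T) * T * ‖Vn hp n (φ:B) - A φ‖) atTop
        (𝓝 0) := by
      have := ((tendsto_iff_norm_sub_tendsto_zero.1 (Vn_tendsto hp φ))).const_mul
        (Real.exp (γ*(1+γ)*T) * T)
      simpa using this
    have hev : ∀ᶠ n in atTop,
        Real.exp (γ*(1+γ)*T) * T * ‖Vn hp n (φ:B) - A φ‖ < ε :=
      hlim.eventually_lt_const hε
    filter_upwards [hev] with n hn t htI
    have hs0 : 0 ≤ max t 0 := le_max_right t 0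
    have hsT : max t 0 ≤ T := max_le (htI.2) hT0.le
    rw [dist_eq_norm, ← Sc_max hp t, norm_sub_rev]
    calc ‖Tt hp n (max t 0) (φ:B) - Sc hp (max t 0) (φ:B)‖
        ≤ Real.exp (γ*(1+γ)*(max t 0)) * (max t 0) * ‖Vn hp n (φ:B) - A φ‖ :=
          Tt_Sc_est hp hs0 φ n
      _ ≤ Real.exp (γ*(1+γ)*T) * T * ‖Vn hp n (φ:B) - A φ‖ := by
          apply mul_le_mul_of_nonneg_right _ (norm_nonneg _)
          apply mul_le_mul (Real.exp_le_exp.2 (by nlinarith)) hsT hs0 (Real.exp_nonneg _)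
      _ < ε := hn
  have hcontn : ∀ n : ℕ, ContinuousOn (fun t => Tt hp n (max t 0) (φ:B)) (Icc (-T) T) := by
    intro n
    exact ((Tt_continuous hp n (φ:B)).comp (continuous_id.max continuous_const)).continuousOn
  have hco := hunif.continuousOn (Filter.Eventually.of_forall hcontn).frequently
  exact hco.continuousAt (Icc_mem_nhds ht₀.1 ht₀.2)

lemma Sc_cont (hp : Pack p A γ) (ψ : B) : Continuous fun t => Sc hp t ψ := by
  have hseq : ∀ k : ℕ, ∃ φ : B, φ ∈ p ∧ ‖ψ - φ‖ < 1/((k:ℝ)+1) := by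
    intro k
    have hk : (0:ℝ) < 1/((k:ℝ)+1) := by positivity
    obtain ⟨φ, hφball, hφp⟩ := Metric.dense_iff.1 hp.dense ψ _ hk
    exact ⟨φ, hφp, by rw [Metric.mem_ball] at hφball; rwa [← dist_eq_norm, dist_comm]⟩
  choose φf hφmem hφn using hseq
  rw [continuous_iff_continuousAt]
  intro t₀
  set T := |t₀| + 1 with hT
  have hT0 : 0 < T := by positivity
  have ht₀ : t₀ ∈ Ioo (-T) T := by
    constructor <;> [linarith [neg_abs_le t₀]; linarith [le_abs_self t₀]]
  have hunif : TendstoUniformlyOn (fun k t => Sc hp t (φf k))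
      (fun t => Sc hp t ψ) atTop (Icc (-T) T) := by
    rw [Metric.tendstoUniformlyOn_iff]
    intro ε hε
    have hlim : Tendsto (fun k : ℕ => Real.exp (γ*T) * (1/((k:ℝ)+1))) atTop (𝓝 0) := by
      have h0 : Tendsto (fun k : ℕ => 1/((k:ℝ)+1)) atTop (𝓝 0) :=
        tendsto_one_div_add_atTop_nhds_zero_nat
      simpa using h0.const_mul (Real.exp (γ*T))
    have hev : ∀ᶠ k : ℕ in atTop, Real.exp (γ*T) * (1/((k:ℝ)+1)) < ε :=
      hlim.eventually_lt_const hε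
    filter_upwards [hev] with k hk t htI
    rw [dist_eq_norm]
    have h1 : Sc hp t ψ - Sc hp t (φf k) = Sc hp t (ψ - φf k) := (map_sub _ _ _).symm
    rw [h1]
    have hb := Sg_norm_le hp t (ψ - φf k)
    have hmax : γ * max t 0 ≤ γ * T := mul_le_mul_of_nonneg_left (max_le htI.2 hT0.le) hp.hγ
    calc ‖Sc hp t (ψ - φf k)‖ ≤ Real.exp (γ * max t 0) * ‖ψ - φf k‖ := hb
      _ ≤ Real.exp (γ*T) * (1/((k:ℝ)+1)) := by
          apply mul_le_mul (Real.exp_le_exp.2 hmax) (hφn k).le (norm_nonneg _)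
            (Real.exp_nonneg _)
      _ < ε := hk
  have hcontk : ∀ k : ℕ, ContinuousOn (fun t => Sc hp t (φf k)) (Icc (-T) T) := fun k =>
    (Sc_cont_p hp ⟨φf k, hφmem k⟩).continuousOn
  have hco := hunif.continuousOn (Filter.Eventually.of_forall hcontk).frequently
  exact hco.continuousAt (Icc_mem_nhds ht₀.1 ht₀.2)

lemma Sc_integral (hp : Pack p A γ) {t : ℝ} (ht : 0 ≤ t) (φ : p) :
    Sc hp t (φ:B) = (φ:B) + ∫ s in (0:ℝ)..t, Sc hp s (A φ) := by
  obtain ⟨M, hM⟩ : ∃ M, ∀ n, ‖Vn hp n (φ:B)‖ ≤ M := by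
    obtain ⟨M, hM⟩ := (Vn_tendsto hp φ).norm.bddAbove_range
    exact ⟨M, fun n => hM (Set.mem_range_self n)⟩
  have hγγ : 0 ≤ γ*(1+γ) := by nlinarith [hp.hγ]
  have hlim : Tendsto (fun n => ∫ s in (0:ℝ)..t, Tt hp n s (Vn hp n (φ:B))) atTop
      (𝓝 (∫ s in (0:ℝ)..t, Sc hp s (A φ))) := by
    apply intervalIntegral.tendsto_integral_filter_of_dominated_convergence
      (bound := fun _ => Real.exp (γ*(1+γ)*t) * M)
    · exact Filter.Eventually.of_forall fun n =>
        (Tt_continuous hp n _).aestronglyMeasurable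
    · refine Filter.Eventually.of_forall fun n => Filter.Eventually.of_forall fun s hs => ?_
      rw [uIoc_of_le ht] at hs
      have h0s : 0 ≤ s := hs.1.le
      calc ‖Tt hp n s (Vn hp n (φ:B))‖
          ≤ Real.exp (γ*(1+γ)*s) * ‖Vn hp n (φ:B)‖ := Tt_apply_norm_le' hp n h0s _
        _ ≤ Real.exp (γ*(1+γ)*t) * M := by
            apply mul_le_mul (Real.exp_le_exp.2 (by nlinarith [hs.2])) (hM n)
              (norm_nonneg _) (Real.exp_nonneg _)
    · exact intervalIntegrable_const
    · refine Filter.Eventually.of_forall fun s hs => ?_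
      rw [uIoc_of_le ht] at hs
      exact Sc_tendsto_apply hp hs.1.le (Vn_tendsto hp φ)
  have h2 := Sc_tendsto hp ht (φ:B)
  have h3 : (fun n => Tt hp n t (φ:B))
      = fun n => (φ:B) + ∫ s in (0:ℝ)..t, Tt hp n s (Vn hp n (φ:B)) := by
    funext n; exact Tt_integral hp n (φ:B) t
  rw [h3] at h2
  exact tendsto_nhds_unique h2 (tendsto_const_nhds.add hlim)

lemma Sc_hasDerivWithinAt (hp : Pack p A γ) {t : ℝ} (ht : 0 ≤ t) (φ : p) :
    HasDerivWithinAt (fun s => Sc hp s (φ:B)) (Sc hp t (A φ)) (Ici 0) t := by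
  have hcont : Continuous fun s => Sc hp s (A φ) := Sc_cont hp _
  have hG : HasDerivAt (fun u => (φ:B) + ∫ s in (0:ℝ)..u, Sc hp s (A φ))
      (Sc hp t (A φ)) t := by
    have h := intervalIntegral.integral_hasDerivAt_right
      (hcont.intervalIntegrable 0 t)
      (hcont.stronglyMeasurable.stronglyMeasurableAtFilter)
      hcont.continuousAt
    exact h.const_add (φ:B)
  refine hG.hasDerivWithinAt.congr (fun y hy => Sc_integral hp hy φ) (Sc_integral hp ht φ)
lemma Sc_prod_rule (hp : Pack p A γ) {x : ℝ} (hx : 0 ≤ x) {g : ℝ → B} {g' : B}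
    (hg : HasDerivWithinAt g g' (Ici 0) x) (hmem : g x ∈ p) :
    HasDerivWithinAt (fun y => Sc hp y (g y))
      (Sc hp x (A ⟨g x, hmem⟩) + Sc hp x g') (Ici 0) x := by
  rw [hasDerivWithinAt_iff_tendsto_slope] at hg ⊢
  have hslope_eq : ∀ y : ℝ, slope (fun y => Sc hp y (g y)) x y
      = Sc hp y (slope g x y) + slope (fun y => Sc hp y (g x)) x y := by
    intro y
    simp only [slope, vsub_eq_sub, map_smul, map_sub, smul_sub]
    abel
  have h2 : Tendsto (fun y => slope (fun y => Sc hp y (g x)) x y) (𝓝[Ici 0 \ {x}] x)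
      (𝓝 (Sc hp x (A ⟨g x, hmem⟩))) := by
    have h := Sc_hasDerivWithinAt hp hx ⟨g x, hmem⟩
    rw [hasDerivWithinAt_iff_tendsto_slope] at h
    exact h
  set K := Real.exp (γ * (|x|+1)) with hK
  have h1a : Tendsto (fun y => Sc hp y (slope g x y - g')) (𝓝[Ici 0 \ {x}] x) (𝓝 0) := by
    have hev : ∀ᶠ y in 𝓝[Ici 0 \ {x}] x,
        ‖Sc hp y (slope g x y - g')‖ ≤ K * ‖slope g x y - g'‖ := by
      have habs : ∀ᶠ y in 𝓝 x, |y| < |x| + 1 :=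
        (continuous_abs.continuousAt (x := x)).eventually_lt_const (lt_add_one |x|)
      refine (habs.filter_mono nhdsWithin_le_nhds).mono fun y hy => ?_
      refine (Sg_norm_le hp y _).trans ?_
      apply mul_le_mul_of_nonneg_right _ (norm_nonneg _)
      apply Real.exp_le_exp.2
      apply mul_le_mul_of_nonneg_left _ hp.hγ
      exact (max_le (le_abs_self y) (abs_nonneg y)).trans hy.le
    have hlim : Tendsto (fun y => K * ‖slope g x y - g'‖) (𝓝[Ici 0 \ {x}] x) (𝓝 0) := by
      have := (tendsto_iff_norm_sub_tendsto_zero.1 hg).const_mul K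
      simpa using this
    exact squeeze_zero_norm' hev hlim
  have h1b : Tendsto (fun y => Sc hp y g') (𝓝[Ici 0 \ {x}] x) (𝓝 (Sc hp x g')) :=
    ((Sc_cont hp g').tendsto x).mono_left nhdsWithin_le_nhds
  have h1 : Tendsto (fun y => Sc hp y (slope g x y)) (𝓝[Ici 0 \ {x}] x) (𝓝 (Sc hp x g')) := by
    have hsum := h1a.add h1b
    rw [zero_add] at hsum
    refine hsum.congr fun y => ?_
    rw [← map_add, sub_add_cancel]
  have hsum2 := h1.add h2
  rw [add_comm] at hsum2
  exact hsum2.congr fun y => (hslope_eq y).symm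
lemma Sc_cancel (hp : Pack p A γ) {A' : p →ₗ[ℝ] B} (hm : Pack p A' γ) (hAA : A' = -A)
    {r : ℝ} (hr : 0 ≤ r) :
    (Sc hp r).comp (Sc hm r) = ContinuousLinearMap.id ℝ B := by
  have hA2 : A = -A' := by rw [hAA, neg_neg]
  have key : ∀ φ : p, Sc hp r (Sc hm r (φ:B)) = (φ:B) := by
    intro φ
    have hderiv : ∀ x : ℝ, 0 ≤ x →
        HasDerivWithinAt (fun y => Sc hp y (Sc hm y (φ:B))) 0 (Ici 0) x := by
      intro x hx0
      have hg : HasDerivWithinAt (fun y => Sc hm y (φ:B)) (Sc hm x (A' φ)) (Ici 0) x :=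
        Sc_hasDerivWithinAt hm hx0 φ
      obtain ⟨hmemx, hAx⟩ := Sc_invariant hm hx0 φ
      have hprod := Sc_prod_rule hp hx0 hg hmemx
      have hA' : A ⟨Sc hm x (φ:B), hmemx⟩ = - Sc hm x (A' φ) := by
        rw [hA2, LinearMap.neg_apply, hAx]
      rw [hA'] at hprod
      simpa using hprod
    have hcont : ContinuousOn (fun y => Sc hp y (Sc hm y (φ:B))) (Icc 0 r) := fun x hx =>
      ((hderiv x hx.1).continuousWithinAt).mono (Icc_subset_Ici_self)
    have hconst := constant_of_has_deriv_right_zero hcont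
      (fun x hx => (hderiv x hx.1).mono (Ici_subset_Ici.2 hx.1))
    have hfr := hconst r (right_mem_Icc.2 hr)
    rw [Sc_zero, Sc_zero] at hfr
    simpa using hfr
  have hco : Continuous fun ψ => Sc hp r (Sc hm r ψ) :=
    (Sc hp r).continuous.comp (Sc hm r).continuous
  have hfun : (fun ψ => Sc hp r (Sc hm r ψ)) = fun ψ : B => ψ := by
    apply Continuous.ext_on hp.dense hco continuous_id
    intro ψ hψ
    exact key ⟨ψ, hψ⟩
  ext ψ
  exact congrFun hfun ψ
lemma group_of_packs (hp : Pack p A γ) (hm : Pack p (-A) γ) :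
    ∃ W : ℝ → B →L[ℝ] B,
      W 0 = ContinuousLinearMap.id ℝ B ∧
      (∀ s t, W (s + t) = (W s).comp (W t)) ∧
      (∀ φ : B, Continuous fun t => W t φ) ∧
      (∀ (t : ℝ) (φ : B), ‖W t φ‖ ≤ Real.exp (γ * |t|) * ‖φ‖) ∧
      (∀ φ : p, ∀ t : ℝ, ∃ h : (W t (φ : B)) ∈ p,
        HasDerivAt (fun s => W s (φ : B)) (A ⟨W t (φ : B), h⟩) t) := by
  set W : ℝ → B →L[ℝ] B := fun t => if 0 ≤ t then Sc hp t else Sc hm (-t) with hW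
  have hWpos : ∀ t : ℝ, 0 ≤ t → W t = Sc hp t := fun t ht => if_pos ht
  have hWneg : ∀ t : ℝ, t < 0 → W t = Sc hm (-t) := fun t ht => if_neg (not_le.2 ht)
  have hW0 : W 0 = ContinuousLinearMap.id ℝ B := by
    rw [hWpos 0 le_rfl, Sc_zero]; rfl
  have hC1 : ∀ r : ℝ, 0 ≤ r → (Sc hp r) * (Sc hm r) = 1 := by
    intro r hr
    ext ψ
    have h := congrArg (fun f : B →L[ℝ] B => f ψ) (Sc_cancel hp hm rfl hr)
    simpa using h
  have hC2 : ∀ r : ℝ, 0 ≤ r → (Sc hm r) * (Sc hp r) = 1 := by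
    intro r hr
    ext ψ
    have h := congrArg (fun f : B →L[ℝ] B => f ψ) (Sc_cancel hm hp (neg_neg A).symm hr)
    simpa using h
  have hWφ : ∀ (φ : B), (fun t => W t φ) = fun t => Sc hp t φ + Sc hm (-t) φ - φ := by
    intro φ
    funext t
    by_cases ht : 0 ≤ t
    · rw [hWpos t ht, Sc_nonpos hm (neg_nonpos.2 ht)]; simp
    · rw [hWneg t (not_le.1 ht), Sc_nonpos hp (le_of_lt (not_le.1 ht))]; simp
  have hWcont : ∀ φ : B, Continuous fun t => W t φ := by
    intro φ
    rw [hWφ φ]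
    exact ((Sc_cont hp φ).add ((Sc_cont hm φ).comp continuous_neg)).sub continuous_const
  have hWnorm : ∀ (t : ℝ) (φ : B), ‖W t φ‖ ≤ Real.exp (γ * |t|) * ‖φ‖ := by
    intro t φ
    by_cases ht : 0 ≤ t
    · rw [hWpos t ht, abs_of_nonneg ht]; exact Sc_norm_apply hp ht φ
    · have ht' : t < 0 := not_le.1 ht
      rw [hWneg t ht', abs_of_neg ht']
      exact Sc_norm_apply hm (by linarith) φ
  have hgroup : ∀ s t, W (s + t) = (W s).comp (W t) := by
    intro s t
    have hcomp : (W s).comp (W t) = W s * W t := rfl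
    rw [hcomp]
    by_cases hs : 0 ≤ s <;> by_cases ht : 0 ≤ t
    · rw [hWpos s hs, hWpos t ht, hWpos _ (by linarith : (0:ℝ) ≤ s + t), Sc_add hp hs ht]
    · have ht' : t < 0 := not_le.1 ht
      rw [hWpos s hs, hWneg t ht']
      by_cases hst : 0 ≤ s + t
      · rw [hWpos _ hst]
        have hsplit : Sc hp s = Sc hp (s+t) * Sc hp (-t) := by
          have h := Sc_add hp hst (by linarith : (0:ℝ) ≤ -t)
          rw [show s + t + -t = s by ring] at h
          exact h
        rw [hsplit, mul_assoc, hC1 (-t) (by linarith), mul_one]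
      · have hst' : s + t < 0 := not_le.1 hst
        rw [hWneg _ hst']
        have hsplit : Sc hm (-t) = Sc hm s * Sc hm (-(s+t)) := by
          have h := Sc_add hm hs (by linarith : (0:ℝ) ≤ -(s+t))
          rw [show s + -(s+t) = -t by ring] at h
          exact h
        rw [hsplit, ← mul_assoc, hC1 s hs, one_mul]
    · have hs' : s < 0 := not_le.1 hs
      rw [hWneg s hs', hWpos t ht]
      by_cases hst : 0 ≤ s + t
      · rw [hWpos _ hst]
        have hsplit : Sc hp t = Sc hp (-s) * Sc hp (s+t) := by
          have h := Sc_add hp (by linarith : (0:ℝ) ≤ -s) hst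
          rw [show -s + (s+t) = t by ring] at h
          exact h
        rw [hsplit, ← mul_assoc, hC2 (-s) (by linarith), one_mul]
      · have hst' : s + t < 0 := not_le.1 hst
        rw [hWneg _ hst']
        have hsplit : Sc hm (-s) = Sc hm (-(s+t)) * Sc hm t := by
          have h := Sc_add hm (by linarith : (0:ℝ) ≤ -(s+t)) ht
          rw [show -(s+t) + t = -s by ring] at h
          exact h
        rw [hsplit, mul_assoc, hC2 t ht, mul_one]
    · have hs' : s < 0 := not_le.1 hs
      have ht' : t < 0 := not_le.1 ht
      rw [hWneg s hs', hWneg t ht', hWneg _ (by linarith : s + t < 0)]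
      have h := Sc_add hm (by linarith : (0:ℝ) ≤ -s) (by linarith : (0:ℝ) ≤ -t)
      rw [show -s + -t = -(s+t) by ring] at h
      exact h
  have hWinv : ∀ (φ : p) (t : ℝ), ∃ h : W t (φ:B) ∈ p, A ⟨W t (φ:B), h⟩ = W t (A φ) := by
    intro φ t
    by_cases ht : 0 ≤ t
    · rw [hWpos t ht]
      exact Sc_invariant hp ht φ
    · have ht' : t < 0 := not_le.1 ht
      rw [hWneg t ht']
      obtain ⟨h1, h2⟩ := Sc_invariant hm (by linarith : (0:ℝ) ≤ -t) φ
      refine ⟨h1, ?_⟩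
      rw [LinearMap.neg_apply] at h2
      have h3 : Sc hm (-t) ((-A) φ) = - Sc hm (-t) (A φ) := by
        rw [LinearMap.neg_apply, map_neg]
      rw [h3] at h2
      exact neg_injective h2
  have hWint : ∀ (φ : p) (t : ℝ), W t (φ:B) = (φ:B) + ∫ s in (0:ℝ)..t, W s (A φ) := by
    intro φ t
    by_cases ht : 0 ≤ t
    · rw [hWpos t ht, Sc_integral hp ht φ]
      congr 1
      apply intervalIntegral.integral_congr
      intro s hs
      dsimp only
      rw [uIcc_of_le ht] at hs
      rw [hWpos s hs.1]
    · have ht' : t < 0 := not_le.1 ht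
      have hnt : (0:ℝ) ≤ -t := by linarith
      rw [hWneg t ht', Sc_integral hm hnt φ]
      have hAm : ((-A) φ) = -(A φ) := LinearMap.neg_apply A φ
      have h1 : ∫ s in (0:ℝ)..(-t), Sc hm s ((-A) φ)
          = - ∫ s in (0:ℝ)..(-t), Sc hm s (A φ) := by
        rw [← intervalIntegral.integral_neg]
        apply intervalIntegral.integral_congr
        intro s _
        dsimp only
        rw [hAm, map_neg]
      have h3 : ∫ x in (0:ℝ)..(-t), W (-x) (A φ) = ∫ x in (-(-t))..(-(0:ℝ)), W x (A φ) :=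
        intervalIntegral.integral_comp_neg (fun x => W x (A φ))
      rw [neg_neg, neg_zero] at h3
      have h4 : ∫ x in (0:ℝ)..(-t), W (-x) (A φ) = ∫ x in (0:ℝ)..(-t), Sc hm x (A φ) := by
        apply intervalIntegral.integral_congr
        intro x hx
        dsimp only
        rw [uIcc_of_le hnt] at hx
        rcases eq_or_lt_of_le hx.1 with heq | hlt
        · rw [← heq, neg_zero, hW0, Sc_zero]; rfl
        · have hx0 : -x < 0 := by linarith
          rw [hWneg _ hx0, neg_neg]
      have h2 : ∫ s in (0:ℝ)..t, W s (A φ) = - ∫ x in (0:ℝ)..(-t), Sc hm x (A φ) := by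
        calc ∫ s in (0:ℝ)..t, W s (A φ) = - ∫ s in t..(0:ℝ), W s (A φ) := by
              rw [intervalIntegral.integral_symm]
          _ = - ∫ x in (0:ℝ)..(-t), W (-x) (A φ) := by rw [h3]
          _ = - ∫ x in (0:ℝ)..(-t), Sc hm x (A φ) := by rw [h4]
      rw [h1, h2]
  have hWderiv : ∀ (φ : p) (t : ℝ), ∃ h : W t (φ:B) ∈ p,
      HasDerivAt (fun s => W s (φ:B)) (A ⟨W t (φ:B), h⟩) t := by
    intro φ t
    obtain ⟨h1, h2⟩ := hWinv φ t
    refine ⟨h1, ?_⟩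
    rw [h2]
    have hcont : Continuous fun s => W s (A φ) := hWcont (A φ)
    have hG : HasDerivAt (fun u => (φ:B) + ∫ s in (0:ℝ)..u, W s (A φ)) (W t (A φ)) t := by
      have h := intervalIntegral.integral_hasDerivAt_right
        (hcont.intervalIntegrable 0 t)
        (hcont.stronglyMeasurable.stronglyMeasurableAtFilter)
        hcont.continuousAt
      exact h.const_add (φ:B)
    have hfun : (fun s => W s (φ:B)) = fun u => (φ:B) + ∫ s in (0:ℝ)..u, W s (A φ) := by
      funext u; exact hWint φ u
    rw [hfun]
    exact hG
  exact ⟨W, hW0, hgroup, hWcont, hWnorm, hWderiv⟩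
end HYG

/-- Hille–Yosida for groups: a closed densely defined operator `A` on a Banach space whose
real `λ` with `|λ| > γ` lie in the resolvent set with `‖(λ−A)⁻¹‖ ≤ (|λ|−γ)⁻¹` generates a
γ-contractive one-parameter group `(W_t)`: `W_0 = id`, `W_{s+t} = W_s W_t`, `t ↦ W_t φ` is
continuous, differentiable with derivative `A W_t φ` for `φ ∈ D(A)`, and
`‖W_t φ‖ ≤ e^{γ|t|}‖φ‖`. -/
theorem hille_yosida_group
    {B : Type*} [NormedAddCommGroup B] [NormedSpace ℝ B] [CompleteSpace B]
    (p : Submodule ℝ B) (A : p →ₗ[ℝ] B) (γ : ℝ) (hγ : 0 ≤ γ)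
    (hdense : Dense (p : Set B))
    (hclosed : ∀ (u : ℕ → p) (x y : B),
      Filter.Tendsto (fun n => ((u n : B))) Filter.atTop (nhds x) →
      Filter.Tendsto (fun n => A (u n)) Filter.atTop (nhds y) →
      ∃ hx : x ∈ p, A ⟨x, hx⟩ = y)
    (hres : ∀ lam : ℝ, γ < |lam| →
      Function.Bijective (fun u : p => lam • (u : B) - A u) ∧
      ∀ u : p, (|lam| - γ) * ‖(u : B)‖ ≤ ‖lam • (u : B) - A u‖) :
    ∃ W : ℝ → B →L[ℝ] B,
      W 0 = ContinuousLinearMap.id ℝ B ∧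
      (∀ s t, W (s + t) = (W s).comp (W t)) ∧
      (∀ φ : B, Continuous fun t => W t φ) ∧
      (∀ (t : ℝ) (φ : B), ‖W t φ‖ ≤ Real.exp (γ * |t|) * ‖φ‖) ∧
      (∀ φ : p, ∀ t : ℝ, ∃ h : (W t (φ : B)) ∈ p,
        HasDerivAt (fun s => W s (φ : B)) (A ⟨W t (φ : B), h⟩) t) := by
  have hp : HYG.Pack p A γ := by
    refine ⟨hγ, hdense, ?_, ?_⟩
    · intro lam hl
      have hpos : 0 < lam := lt_of_le_of_lt hγ hl
      exact (hres lam (by rwa [abs_of_pos hpos])).1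
    · intro lam hl u
      have hpos : 0 < lam := lt_of_le_of_lt hγ hl
      have hb := (hres lam (by rwa [abs_of_pos hpos])).2 u
      rwa [abs_of_pos hpos] at hb
  have hm : HYG.Pack p (-A) γ := by
    refine ⟨hγ, hdense, ?_, ?_⟩
    · intro lam hl
      have hpos : 0 < lam := lt_of_le_of_lt hγ hl
      have h := hres (-lam) (by rwa [abs_neg, abs_of_pos hpos])
      have hfun : (fun u : p => lam • (u:B) - (-A) u)
          = fun u : p => -(((-lam) • (u:B)) - A u) := by
        funext u
        rw [LinearMap.neg_apply, neg_sub, neg_smul]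
        abel
      rw [hfun]
      exact neg_involutive.bijective.comp h.1
    · intro lam hl u
      have hpos : 0 < lam := lt_of_le_of_lt hγ hl
      have hb := (hres (-lam) (by rwa [abs_neg, abs_of_pos hpos])).2 u
      rw [abs_neg, abs_of_pos hpos] at hb
      have heq : lam • (u:B) - (-A) u = -(((-lam) • (u:B)) - A u) := by
        rw [LinearMap.neg_apply, neg_sub, neg_smul]
        abel
      rw [heq, norm_neg]
      exact hb
  exact HYG.group_of_packs hp hm
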